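/- Let (x_1,x_2) have the Farlie–Gumbel–Morgenstern density c_θ(x_1,x_2) = 1 + θ(1−2x_1)(1−2x_2) on [0,1]², with −1 ≤ θ ≤ 1, and let f(x) = β_1 x_1 + β_2 x_2 for β ∈ ℝ². Then σ² := Var(f(x)) = (β_1² + β_2²)/12 + β_1β_2θ/18, Var(E[f(x)|x_1]) = (1/12)(β_1 + (θ/3)β_2)², and if σ² > 0 the Shapley value φ_1 of variable 1 satisfies φ_1/σ² = (1/2)(1 + (1 − θ²/9)(β_1² − β_2²)/(12σ²)). -/

import Mathlib

open MeasureTheory ProbabilityTheory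

/-- The Farlie–Gumbel–Morgenstern copula measure with parameter `θ` on `[0,1]²`:
it has density `1 + θ(1-2x₁)(1-2x₂)` with respect to Lebesgue measure on `[0,1]²`. -/
noncomputable def fgm (θ : ℝ) : Measure (ℝ × ℝ) :=
  ((volume : Measure (ℝ × ℝ)).restrict (Set.Icc 0 1 ×ˢ Set.Icc 0 1)).withDensity
    fun p => ENNReal.ofReal (1 + θ * (1 - 2 * p.1) * (1 - 2 * p.2))


open scoped NNReal ENNReal

variable {θ : ℝ}

lemma fgm_density_nonneg (hθ₁ : -1 ≤ θ) (hθ₂ : θ ≤ 1) {x y : ℝ}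
    (hx : x ∈ Set.Icc (0:ℝ) 1) (hy : y ∈ Set.Icc (0:ℝ) 1) :
    0 ≤ 1 + θ * (1 - 2 * x) * (1 - 2 * y) := by
  have h1 : |θ| ≤ 1 := abs_le.2 ⟨hθ₁, hθ₂⟩
  have h2 : |1 - 2 * x| ≤ 1 := abs_le.2 ⟨by linarith [hx.1, hx.2], by linarith [hx.1, hx.2]⟩
  have h3 : |1 - 2 * y| ≤ 1 := abs_le.2 ⟨by linarith [hy.1, hy.2], by linarith [hy.1, hy.2]⟩
  have h4 : |θ * (1 - 2 * x) * (1 - 2 * y)| ≤ 1 := by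
    rw [abs_mul, abs_mul]
    calc |θ| * |1 - 2 * x| * |1 - 2 * y| ≤ 1 * 1 * 1 := by
          gcongr <;> positivity
      _ = 1 := by norm_num
  linarith [neg_abs_le (θ * (1 - 2 * x) * (1 - 2 * y))]

lemma fgm_cont (g : ℝ × ℝ → ℝ) (hg : Continuous g) :
    Continuous fun p : ℝ × ℝ => max (1 + θ * (1 - 2 * p.1) * (1 - 2 * p.2)) 0 * g p := by
  apply Continuous.mul _ hg
  apply Continuous.max _ continuous_const
  continuity

lemma fgm_integrable_aux (hθ₁ : -1 ≤ θ) (hθ₂ : θ ≤ 1) (g : ℝ × ℝ → ℝ) (hg : Continuous g)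
    (s : Set ℝ) (t : Set ℝ) (hs : s ⊆ Set.Icc 0 1) (ht : t ⊆ Set.Icc 0 1) :
    Integrable (fun p : ℝ × ℝ => max (1 + θ * (1 - 2 * p.1) * (1 - 2 * p.2)) 0 * g p)
      ((volume.restrict s).prod (volume.restrict t)) := by
  rw [Measure.prod_restrict]
  refine Integrable.mono_measure ?_
    (Measure.restrict_mono (Set.prod_mono hs ht) le_rfl)
  have h := ContinuousOn.integrableOn_compact (μ := volume)
    (K := Set.Icc (0:ℝ) 1 ×ˢ Set.Icc (0:ℝ) 1)
    (isCompact_Icc.prod isCompact_Icc) (fgm_cont g hg (θ := θ)).continuousOn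
  rwa [IntegrableOn, Measure.volume_eq_prod] at h

lemma fgm_setIntegral_fst (hθ₁ : -1 ≤ θ) (hθ₂ : θ ≤ 1) {t : Set ℝ} (ht : MeasurableSet t)
    {g : ℝ × ℝ → ℝ} (hg : Continuous g) :
    ∫ p in Prod.fst ⁻¹' t, g p ∂(fgm θ)
      = ∫ x in Set.Icc (0:ℝ) 1 ∩ t, ∫ y in Set.Icc (0:ℝ) 1,
          g (x, y) * (1 + θ * (1 - 2 * x) * (1 - 2 * y)) := by
  have hc : Continuous fun p : ℝ × ℝ => 1 + θ * (1 - 2 * p.1) * (1 - 2 * p.2) := by continuity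
  unfold fgm
  rw [restrict_withDensity (ht.preimage measurable_fst),
    Measure.restrict_restrict (ht.preimage measurable_fst)]
  have hset : Prod.fst ⁻¹' t ∩ Set.Icc 0 1 ×ˢ Set.Icc 0 1
      = (Set.Icc (0:ℝ) 1 ∩ t) ×ˢ Set.Icc (0:ℝ) 1 := by
    ext p
    simp only [Set.mem_inter_iff, Set.mem_preimage, Set.mem_prod]
    tauto
  rw [hset]
  have hd : (fun p : ℝ × ℝ => ENNReal.ofReal (1 + θ * (1 - 2 * p.1) * (1 - 2 * p.2)))
      = fun p => ((Real.toNNReal (1 + θ * (1 - 2 * p.1) * (1 - 2 * p.2)) : ℝ≥0) : ℝ≥0∞) := rfl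
  rw [hd, integral_withDensity_eq_integral_smul hc.measurable.real_toNNReal]
  have hsmul : (fun p : ℝ × ℝ => Real.toNNReal (1 + θ * (1 - 2 * p.1) * (1 - 2 * p.2)) • g p)
      = fun p => max (1 + θ * (1 - 2 * p.1) * (1 - 2 * p.2)) 0 * g p := by
    funext p
    simp [NNReal.smul_def, Real.coe_toNNReal']
  rw [hsmul, Measure.volume_eq_prod, ← Measure.prod_restrict,
    integral_prod _ (fgm_integrable_aux hθ₁ hθ₂ g hg _ _ Set.inter_subset_left subset_rfl)]
  refine setIntegral_congr_fun (measurableSet_Icc.inter ht) fun x hx => ?_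
  refine setIntegral_congr_fun measurableSet_Icc fun y hy => ?_
  rw [max_eq_left (fgm_density_nonneg hθ₁ hθ₂ hx.1 hy), mul_comm]

lemma fgm_setIntegral_snd (hθ₁ : -1 ≤ θ) (hθ₂ : θ ≤ 1) {t : Set ℝ} (ht : MeasurableSet t)
    {g : ℝ × ℝ → ℝ} (hg : Continuous g) :
    ∫ p in Prod.snd ⁻¹' t, g p ∂(fgm θ)
      = ∫ y in Set.Icc (0:ℝ) 1 ∩ t, ∫ x in Set.Icc (0:ℝ) 1,
          g (x, y) * (1 + θ * (1 - 2 * x) * (1 - 2 * y)) := by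
  have hc : Continuous fun p : ℝ × ℝ => 1 + θ * (1 - 2 * p.1) * (1 - 2 * p.2) := by continuity
  unfold fgm
  rw [restrict_withDensity (ht.preimage measurable_snd),
    Measure.restrict_restrict (ht.preimage measurable_snd)]
  have hset : Prod.snd ⁻¹' t ∩ Set.Icc 0 1 ×ˢ Set.Icc 0 1
      = Set.Icc (0:ℝ) 1 ×ˢ (Set.Icc (0:ℝ) 1 ∩ t) := by
    ext p
    simp only [Set.mem_inter_iff, Set.mem_preimage, Set.mem_prod]
    tauto
  rw [hset]
  have hd : (fun p : ℝ × ℝ => ENNReal.ofReal (1 + θ * (1 - 2 * p.1) * (1 - 2 * p.2)))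
      = fun p => ((Real.toNNReal (1 + θ * (1 - 2 * p.1) * (1 - 2 * p.2)) : ℝ≥0) : ℝ≥0∞) := rfl
  rw [hd, integral_withDensity_eq_integral_smul hc.measurable.real_toNNReal]
  have hsmul : (fun p : ℝ × ℝ => Real.toNNReal (1 + θ * (1 - 2 * p.1) * (1 - 2 * p.2)) • g p)
      = fun p => max (1 + θ * (1 - 2 * p.1) * (1 - 2 * p.2)) 0 * g p := by
    funext p
    simp [NNReal.smul_def, Real.coe_toNNReal']
  rw [hsmul, Measure.volume_eq_prod, ← Measure.prod_restrict,
    integral_prod_symm _ (fgm_integrable_aux hθ₁ hθ₂ g hg _ _ subset_rfl Set.inter_subset_left)]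
  refine setIntegral_congr_fun (measurableSet_Icc.inter ht) fun y hy => ?_
  refine setIntegral_congr_fun measurableSet_Icc fun x hx => ?_
  rw [max_eq_left (fgm_density_nonneg hθ₁ hθ₂ hx hy.1), mul_comm]

lemma fgm_integral (hθ₁ : -1 ≤ θ) (hθ₂ : θ ≤ 1) {g : ℝ × ℝ → ℝ} (hg : Continuous g) :
    ∫ p, g p ∂(fgm θ)
      = ∫ x in Set.Icc (0:ℝ) 1, ∫ y in Set.Icc (0:ℝ) 1,
          g (x, y) * (1 + θ * (1 - 2 * x) * (1 - 2 * y)) := by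
  have := fgm_setIntegral_fst hθ₁ hθ₂ MeasurableSet.univ hg (θ := θ)
  simpa using this


lemma integral_cubic (a b c d : ℝ) :
    ∫ x in Set.Icc (0:ℝ) 1, (a + b*x + c*x^2 + d*x^3) = a + b/2 + c/3 + d/4 := by
  rw [integral_Icc_eq_integral_Ioc, ← intervalIntegral.integral_of_le zero_le_one]
  rw [intervalIntegral.integral_eq_sub_of_hasDerivAt
    (f := fun x : ℝ => a*x + b/2*x^2 + c/3*x^3 + d/4*x^4)
    (fun x _ => by
      have h := (((hasDerivAt_id x).const_mul a).add
        (((hasDerivAt_pow 2 x).const_mul (b/2)).add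
          (((hasDerivAt_pow 3 x).const_mul (c/3)).add
            ((hasDerivAt_pow 4 x).const_mul (d/4)))))
      convert h using 1
      · funext t; simp only [id, Pi.add_apply]; ring
      · push_cast; norm_num; ring)
    (by apply Continuous.intervalIntegrable; continuity)]
  ring

lemma cubic_integral_eq {F : ℝ → ℝ} (a b c d r : ℝ)
    (h : ∀ y, F y = a + b*y + c*y^2 + d*y^3) (hr : a + b/2 + c/3 + d/4 = r) :
    ∫ y in Set.Icc (0:ℝ) 1, F y = r := by
  rw [show F = fun y => a + b*y + c*y^2 + d*y^3 from funext h, integral_cubic, hr]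

lemma fgm_moment_one (hθ₁ : -1 ≤ θ) (hθ₂ : θ ≤ 1) :
    ∫ p, (1:ℝ) ∂(fgm θ) = 1 := by
  rw [fgm_integral hθ₁ hθ₂ continuous_const]
  have hin : ∀ x : ℝ, ∫ y in Set.Icc (0:ℝ) 1,
      (1:ℝ) * (1 + θ * (1 - 2 * x) * (1 - 2 * y)) = 1 := fun x =>
    cubic_integral_eq (1 + θ * (1 - 2 * x)) (-(2 * θ * (1 - 2 * x))) 0 0 1
      (fun y => by ring) (by ring)
  simp only [hin]
  exact cubic_integral_eq 1 0 0 0 1 (fun x => by ring) (by norm_num)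

lemma fgm_moment_f (hθ₁ : -1 ≤ θ) (hθ₂ : θ ≤ 1) (β₁ β₂ : ℝ) :
    ∫ p : ℝ × ℝ, (β₁ * p.1 + β₂ * p.2) ∂(fgm θ) = (β₁ + β₂) / 2 := by
  rw [fgm_integral hθ₁ hθ₂ (by fun_prop)]
  have hin : ∀ x : ℝ, ∫ y in Set.Icc (0:ℝ) 1,
      (β₁ * x + β₂ * y) * (1 + θ * (1 - 2 * x) * (1 - 2 * y))
      = (β₂ / 2 - θ * β₂ / 6) + (β₁ + θ * β₂ / 3) * x := fun x =>
    cubic_integral_eq (β₁ * x * (1 + θ * (1 - 2 * x)))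
      (β₂ * (1 + θ * (1 - 2 * x)) - 2 * θ * (1 - 2 * x) * β₁ * x)
      (-(2 * θ * (1 - 2 * x) * β₂)) 0 _ (fun y => by ring) (by ring)
  simp only [hin]
  exact cubic_integral_eq (β₂ / 2 - θ * β₂ / 6) (β₁ + θ * β₂ / 3) 0 0 _
    (fun x => by ring) (by ring)

lemma fgm_moment_f_sq (hθ₁ : -1 ≤ θ) (hθ₂ : θ ≤ 1) (β₁ β₂ : ℝ) :
    ∫ p : ℝ × ℝ, (β₁ * p.1 + β₂ * p.2) ^ 2 ∂(fgm θ)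
      = β₁ ^ 2 / 3 + β₂ ^ 2 / 3 + β₁ * β₂ / 2 + θ * β₁ * β₂ / 18 := by
  rw [fgm_integral hθ₁ hθ₂ (by fun_prop)]
  have hin : ∀ x : ℝ, ∫ y in Set.Icc (0:ℝ) 1,
      (β₁ * x + β₂ * y) ^ 2 * (1 + θ * (1 - 2 * x) * (1 - 2 * y))
      = (β₂ ^ 2 / 3 - θ * β₂ ^ 2 / 6)
        + (β₁ * β₂ - θ * β₁ * β₂ / 3 + θ * β₂ ^ 2 / 3) * x
        + (β₁ ^ 2 + 2 * θ * β₁ * β₂ / 3) * x ^ 2 := fun x =>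
    cubic_integral_eq (β₁ ^ 2 * x ^ 2 * (1 + θ * (1 - 2 * x)))
      (2 * β₁ * β₂ * x * (1 + θ * (1 - 2 * x)) - 2 * θ * (1 - 2 * x) * β₁ ^ 2 * x ^ 2)
      (β₂ ^ 2 * (1 + θ * (1 - 2 * x)) - 4 * θ * (1 - 2 * x) * β₁ * β₂ * x)
      (-(2 * θ * (1 - 2 * x) * β₂ ^ 2)) _ (fun y => by ring) (by ring)
  simp only [hin]
  exact cubic_integral_eq (β₂ ^ 2 / 3 - θ * β₂ ^ 2 / 6)
    (β₁ * β₂ - θ * β₁ * β₂ / 3 + θ * β₂ ^ 2 / 3)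
    (β₁ ^ 2 + 2 * θ * β₁ * β₂ / 3) 0 _ (fun x => by ring) (by ring)

lemma fgm_moment_lin_fst (hθ₁ : -1 ≤ θ) (hθ₂ : θ ≤ 1) (a b : ℝ) :
    ∫ p : ℝ × ℝ, (a * p.1 + b) ∂(fgm θ) = a / 2 + b := by
  rw [fgm_integral hθ₁ hθ₂ (by fun_prop)]
  have hin : ∀ x : ℝ, ∫ y in Set.Icc (0:ℝ) 1,
      (a * x + b) * (1 + θ * (1 - 2 * x) * (1 - 2 * y)) = b + a * x := fun x =>
    cubic_integral_eq ((a * x + b) * (1 + θ * (1 - 2 * x)))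
      (-(2 * θ * (1 - 2 * x) * (a * x + b))) 0 0 _ (fun y => by ring) (by ring)
  simp only [hin]
  exact cubic_integral_eq b a 0 0 _ (fun x => by ring) (by ring)

lemma fgm_moment_lin_fst_sq (hθ₁ : -1 ≤ θ) (hθ₂ : θ ≤ 1) (a b : ℝ) :
    ∫ p : ℝ × ℝ, (a * p.1 + b) ^ 2 ∂(fgm θ) = a ^ 2 / 3 + a * b + b ^ 2 := by
  rw [fgm_integral hθ₁ hθ₂ (by fun_prop)]
  have hin : ∀ x : ℝ, ∫ y in Set.Icc (0:ℝ) 1,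
      (a * x + b) ^ 2 * (1 + θ * (1 - 2 * x) * (1 - 2 * y))
      = b ^ 2 + 2 * a * b * x + a ^ 2 * x ^ 2 := fun x =>
    cubic_integral_eq ((a * x + b) ^ 2 * (1 + θ * (1 - 2 * x)))
      (-(2 * θ * (1 - 2 * x) * (a * x + b) ^ 2)) 0 0 _ (fun y => by ring) (by ring)
  simp only [hin]
  exact cubic_integral_eq (b ^ 2) (2 * a * b) (a ^ 2) 0 _ (fun x => by ring) (by ring)

lemma fgm_moment_lin_snd (hθ₁ : -1 ≤ θ) (hθ₂ : θ ≤ 1) (a b : ℝ) :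
    ∫ p : ℝ × ℝ, (a * p.2 + b) ∂(fgm θ) = a / 2 + b := by
  rw [fgm_integral hθ₁ hθ₂ (by fun_prop)]
  have hin : ∀ x : ℝ, ∫ y in Set.Icc (0:ℝ) 1,
      (a * y + b) * (1 + θ * (1 - 2 * x) * (1 - 2 * y))
      = (b + a / 2 - θ * a / 6) + (θ * a / 3) * x := fun x =>
    cubic_integral_eq (b * (1 + θ * (1 - 2 * x)))
      (a * (1 + θ * (1 - 2 * x)) - 2 * θ * (1 - 2 * x) * b)
      (-(2 * θ * (1 - 2 * x) * a)) 0 _ (fun y => by ring) (by ring)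
  simp only [hin]
  exact cubic_integral_eq (b + a / 2 - θ * a / 6) (θ * a / 3) 0 0 _
    (fun x => by ring) (by ring)

lemma fgm_moment_lin_snd_sq (hθ₁ : -1 ≤ θ) (hθ₂ : θ ≤ 1) (a b : ℝ) :
    ∫ p : ℝ × ℝ, (a * p.2 + b) ^ 2 ∂(fgm θ) = a ^ 2 / 3 + a * b + b ^ 2 := by
  rw [fgm_integral hθ₁ hθ₂ (by fun_prop)]
  have hin : ∀ x : ℝ, ∫ y in Set.Icc (0:ℝ) 1,
      (a * y + b) ^ 2 * (1 + θ * (1 - 2 * x) * (1 - 2 * y))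
      = (b ^ 2 + a * b + a ^ 2 / 3 - θ * (2 * a * b + a ^ 2) / 6)
        + (θ * (2 * a * b + a ^ 2) / 3) * x := fun x =>
    cubic_integral_eq (b ^ 2 * (1 + θ * (1 - 2 * x)))
      (2 * a * b * (1 + θ * (1 - 2 * x)) - 2 * θ * (1 - 2 * x) * b ^ 2)
      (a ^ 2 * (1 + θ * (1 - 2 * x)) - 4 * θ * (1 - 2 * x) * a * b)
      (-(2 * θ * (1 - 2 * x) * a ^ 2)) _ (fun y => by ring) (by ring)
  simp only [hin]
  exact cubic_integral_eq (b ^ 2 + a * b + a ^ 2 / 3 - θ * (2 * a * b + a ^ 2) / 6)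
    (θ * (2 * a * b + a ^ 2) / 3) 0 0 _ (fun x => by ring) (by ring)

lemma fgm_isProbabilityMeasure (hθ₁ : -1 ≤ θ) (hθ₂ : θ ≤ 1) :
    IsProbabilityMeasure (fgm θ) := by
  constructor
  have h1 := fgm_moment_one hθ₁ hθ₂
  rw [integral_const, smul_eq_mul, mul_one] at h1
  exact (ENNReal.toReal_eq_one_iff _).1 h1

lemma fgm_ae_mem (hθ₁ : -1 ≤ θ) (hθ₂ : θ ≤ 1) :
    ∀ᵐ p ∂(fgm θ), p ∈ (Set.Icc (0:ℝ) 1 ×ˢ Set.Icc (0:ℝ) 1) :=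
  (withDensity_absolutelyContinuous _ _).ae_le
    (ae_restrict_mem (measurableSet_Icc.prod measurableSet_Icc))

lemma fgm_memLp (hθ₁ : -1 ≤ θ) (hθ₂ : θ ≤ 1) {g : ℝ × ℝ → ℝ} (hg : Continuous g) :
    MemLp g 2 (fgm θ) := by
  haveI := fgm_isProbabilityMeasure hθ₁ hθ₂
  obtain ⟨C, hC⟩ := (isCompact_Icc.prod isCompact_Icc).exists_bound_of_continuousOn
    (hg.continuousOn (s := Set.Icc (0:ℝ) 1 ×ˢ Set.Icc (0:ℝ) 1))
  exact MemLp.of_bound hg.aestronglyMeasurable C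
    ((fgm_ae_mem hθ₁ hθ₂).mono fun p hp => hC p hp)

lemma fgm_integrable (hθ₁ : -1 ≤ θ) (hθ₂ : θ ≤ 1) {g : ℝ × ℝ → ℝ} (hg : Continuous g) :
    Integrable g (fgm θ) := by
  haveI := fgm_isProbabilityMeasure hθ₁ hθ₂
  exact (fgm_memLp hθ₁ hθ₂ hg).integrable one_le_two

lemma variance_congr' {α : Type*} {m : MeasurableSpace α} {X Y : α → ℝ} {μ : Measure α}
    (h : X =ᵐ[μ] Y) : variance X μ = variance Y μ := by
  have hi : μ[X] = μ[Y] := integral_congr_ae h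
  rw [variance, variance, evariance, evariance, hi]
  exact congrArg ENNReal.toReal
    (lintegral_congr_ae (h.mono fun ω hω => by simp only []; rw [hω]))

lemma fgm_condexp_fst (hθ₁ : -1 ≤ θ) (hθ₂ : θ ≤ 1) {f : ℝ × ℝ → ℝ} (hf : Continuous f)
    {φ : ℝ → ℝ} (hφ : Continuous φ)
    (heq : ∀ x : ℝ, (∫ y in Set.Icc (0:ℝ) 1,
      f (x, y) * (1 + θ * (1 - 2 * x) * (1 - 2 * y))) = φ x) :
    (fun p : ℝ × ℝ => φ p.1)
      =ᵐ[fgm θ] (fgm θ)[f | MeasurableSpace.comap Prod.fst Real.measurableSpace] := by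
  haveI := fgm_isProbabilityMeasure hθ₁ hθ₂
  have hφf : Continuous fun p : ℝ × ℝ => φ p.1 := hφ.comp continuous_fst
  refine ae_eq_condExp_of_forall_setIntegral_eq (measurable_fst.comap_le)
    (fgm_integrable hθ₁ hθ₂ hf)
    (fun s _ _ => (fgm_integrable hθ₁ hθ₂ hφf).integrableOn)
    (fun s hs _ => ?_) ?_
  · obtain ⟨t, ht, rfl⟩ := hs
    rw [fgm_setIntegral_fst hθ₁ hθ₂ ht hφf, fgm_setIntegral_fst hθ₁ hθ₂ ht hf]
    refine setIntegral_congr_fun (measurableSet_Icc.inter ht) fun x _ => ?_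
    rw [heq x]
    exact cubic_integral_eq (φ x * (1 + θ * (1 - 2 * x)))
      (-(2 * θ * (1 - 2 * x) * φ x)) 0 0 _ (fun y => by ring) (by ring)
  · refine ⟨fun p : ℝ × ℝ => φ p.1, ?_, Filter.EventuallyEq.rfl⟩
    exact Measurable.stronglyMeasurable
      (hφ.measurable.comp (Measurable.of_comap_le le_rfl))

lemma fgm_condexp_snd (hθ₁ : -1 ≤ θ) (hθ₂ : θ ≤ 1) {f : ℝ × ℝ → ℝ} (hf : Continuous f)
    {φ : ℝ → ℝ} (hφ : Continuous φ)
    (heq : ∀ y : ℝ, (∫ x in Set.Icc (0:ℝ) 1,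
      f (x, y) * (1 + θ * (1 - 2 * x) * (1 - 2 * y))) = φ y) :
    (fun p : ℝ × ℝ => φ p.2)
      =ᵐ[fgm θ] (fgm θ)[f | MeasurableSpace.comap Prod.snd Real.measurableSpace] := by
  haveI := fgm_isProbabilityMeasure hθ₁ hθ₂
  have hφf : Continuous fun p : ℝ × ℝ => φ p.2 := hφ.comp continuous_snd
  refine ae_eq_condExp_of_forall_setIntegral_eq (measurable_snd.comap_le)
    (fgm_integrable hθ₁ hθ₂ hf)
    (fun s _ _ => (fgm_integrable hθ₁ hθ₂ hφf).integrableOn)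
    (fun s hs _ => ?_) ?_
  · obtain ⟨t, ht, rfl⟩ := hs
    rw [fgm_setIntegral_snd hθ₁ hθ₂ ht hφf, fgm_setIntegral_snd hθ₁ hθ₂ ht hf]
    refine setIntegral_congr_fun (measurableSet_Icc.inter ht) fun y _ => ?_
    rw [heq y]
    exact cubic_integral_eq (φ y * (1 + θ * (1 - 2 * y)))
      (-(2 * θ * (1 - 2 * y) * φ y)) 0 0 _ (fun x => by ring) (by ring)
  · refine ⟨fun p : ℝ × ℝ => φ p.2, ?_, Filter.EventuallyEq.rfl⟩
    exact Measurable.stronglyMeasurable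
      (hφ.measurable.comp (Measurable.of_comap_le le_rfl))


/-- The Shapley value of variable `1` in the bivariate game `val u = Var(E[Y ∣ x_u])`:
`φ₁ = (1/2)(Var(E[Y ∣ x₁]) + Var(Y) - Var(E[Y ∣ x₂]))`. -/
noncomputable def phiOne (μ : Measure (ℝ × ℝ)) (Y : ℝ × ℝ → ℝ) : ℝ :=
  (1 / 2) * (variance (μ[Y | MeasurableSpace.comap Prod.fst Real.measurableSpace]) μ
    + variance Y μ
    - variance (μ[Y | MeasurableSpace.comap Prod.snd Real.measurableSpace]) μ)

/-- Shapley effects of the linear function `f(x) = β₁x₁ + β₂x₂` under the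
Farlie–Gumbel–Morgenstern copula with parameter `θ ∈ [-1,1]`:
`σ² = (β₁² + β₂²)/12 + β₁β₂θ/18`, `Var(E[f∣x₁]) = (1/12)(β₁ + (θ/3)β₂)²`, and if
`σ² > 0` then `φ₁/σ² = (1/2)(1 + (1 - θ²/9)(β₁² - β₂²)/(12σ²))`. -/
theorem fgm_linear_shapley (θ : ℝ) (hθ₁ : -1 ≤ θ) (hθ₂ : θ ≤ 1) (β₁ β₂ : ℝ) :
    variance (fun p => β₁ * p.1 + β₂ * p.2) (fgm θ)
        = (β₁ ^ 2 + β₂ ^ 2) / 12 + β₁ * β₂ * θ / 18 ∧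
      variance ((fgm θ)[fun p => β₁ * p.1 + β₂ * p.2 |
          MeasurableSpace.comap Prod.fst Real.measurableSpace]) (fgm θ)
        = (1 / 12) * (β₁ + θ / 3 * β₂) ^ 2 ∧
      (0 < variance (fun p => β₁ * p.1 + β₂ * p.2) (fgm θ) →
        phiOne (fgm θ) (fun p => β₁ * p.1 + β₂ * p.2)
            / variance (fun p => β₁ * p.1 + β₂ * p.2) (fgm θ)
          = (1 / 2) * (1 + (1 - θ ^ 2 / 9) * (β₁ ^ 2 - β₂ ^ 2)
              / (12 * variance (fun p => β₁ * p.1 + β₂ * p.2) (fgm θ)))) := by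
  haveI := fgm_isProbabilityMeasure hθ₁ hθ₂
  have hfc : Continuous fun p : ℝ × ℝ => β₁ * p.1 + β₂ * p.2 := by fun_prop
  -- variance of f
  have hVf : variance (fun p : ℝ × ℝ => β₁ * p.1 + β₂ * p.2) (fgm θ)
      = (β₁ ^ 2 + β₂ ^ 2) / 12 + β₁ * β₂ * θ / 18 := by
    rw [variance_eq_sub (fgm_memLp hθ₁ hθ₂ hfc)]
    simp only [Pi.pow_apply]
    rw [fgm_moment_f_sq hθ₁ hθ₂, fgm_moment_f hθ₁ hθ₂]
    ring
  -- conditional expectation given x₁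
  have hg1 := fgm_condexp_fst hθ₁ hθ₂ hfc
    (φ := fun x => (β₁ + θ * β₂ / 3) * x + (β₂ / 2 - θ * β₂ / 6)) (by fun_prop)
    (fun x => cubic_integral_eq (β₁ * x * (1 + θ * (1 - 2 * x)))
      (β₂ * (1 + θ * (1 - 2 * x)) - 2 * θ * (1 - 2 * x) * β₁ * x)
      (-(2 * θ * (1 - 2 * x) * β₂)) 0 _ (fun y => by ring) (by ring))
  have hg2 := fgm_condexp_snd hθ₁ hθ₂ hfc
    (φ := fun y => (β₂ + θ * β₁ / 3) * y + (β₁ / 2 - θ * β₁ / 6)) (by fun_prop)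
    (fun y => cubic_integral_eq (β₂ * y * (1 + θ * (1 - 2 * y)))
      (β₁ * (1 + θ * (1 - 2 * y)) - 2 * θ * (1 - 2 * y) * β₂ * y)
      (-(2 * θ * (1 - 2 * y) * β₁)) 0 _ (fun x => by ring) (by ring))
  have hV1 : variance ((fgm θ)[fun p : ℝ × ℝ => β₁ * p.1 + β₂ * p.2 |
      MeasurableSpace.comap Prod.fst Real.measurableSpace]) (fgm θ)
      = (1 / 12) * (β₁ + θ / 3 * β₂) ^ 2 := by
    rw [← variance_congr' hg1, variance_eq_sub (fgm_memLp hθ₁ hθ₂ (by fun_prop))]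
    simp only [Pi.pow_apply]
    rw [fgm_moment_lin_fst_sq hθ₁ hθ₂, fgm_moment_lin_fst hθ₁ hθ₂]
    ring
  have hV2 : variance ((fgm θ)[fun p : ℝ × ℝ => β₁ * p.1 + β₂ * p.2 |
      MeasurableSpace.comap Prod.snd Real.measurableSpace]) (fgm θ)
      = (1 / 12) * (β₂ + θ / 3 * β₁) ^ 2 := by
    rw [← variance_congr' hg2, variance_eq_sub (fgm_memLp hθ₁ hθ₂ (by fun_prop))]
    simp only [Pi.pow_apply]
    rw [fgm_moment_lin_snd_sq hθ₁ hθ₂, fgm_moment_lin_snd hθ₁ hθ₂]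
    ring
  have key : ∀ S : ℝ, S ≠ 0 →
      (1 / 2) * (1 / 12 * (β₁ + θ / 3 * β₂) ^ 2 + S - 1 / 12 * (β₂ + θ / 3 * β₁) ^ 2) / S
        = (1 / 2) * (1 + (1 - θ ^ 2 / 9) * (β₁ ^ 2 - β₂ ^ 2) / (12 * S)) := by
    intro S hS
    field_simp
    ring
  refine ⟨hVf, hV1, fun hσ => ?_⟩
  rw [phiOne, hV1, hV2]
  exact key _ (ne_of_gt hσ)
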